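/- In a unimodular cocommutative Hopf algebra H in a symmetric monoidal category, the antipode fixes the integral and cointegral: S ∘ L = L and l ∘ S = l. -/

import Mathlib

open CategoryTheory MonoidalCategory

section HopfAux

set_option linter.unusedSectionVars false

variable {C : Type*} [Category C] [MonoidalCategory C] [SymmetricCategory C]
variable {H : C}

/-- Associativity of the convolution product. -/
lemma hopf_conv_assoc (μ : H ⊗ H ⟶ H) (Δ : H ⟶ H ⊗ H)
    (mul_assoc' : (μ ▷ H) ≫ μ = (α_ H H H).hom ≫ (H ◁ μ) ≫ μ)
    (comul_assoc' : Δ ≫ (Δ ▷ H) ≫ (α_ H H H).hom = Δ ≫ (H ◁ Δ))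
    (f g h : H ⟶ H) :
    Δ ≫ ((Δ ≫ (f ⊗ₘ g) ≫ μ) ⊗ₘ h) ≫ μ = Δ ≫ (f ⊗ₘ (Δ ≫ (g ⊗ₘ h) ≫ μ)) ≫ μ := by
  rw [tensorHom_def (Δ ≫ (f ⊗ₘ g) ≫ μ) h, tensorHom_def f (Δ ≫ (g ⊗ₘ h) ≫ μ)]
  simp only [comp_whiskerRight, MonoidalCategory.whiskerLeft_comp, Category.assoc]
  rw [← whisker_exchange_assoc]
  slice_lhs 3 4 => rw [← MonoidalCategory.tensorHom_def]
  slice_lhs 4 5 => rw [mul_assoc']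
  slice_lhs 3 4 => rw [associator_naturality]
  slice_lhs 1 3 => rw [comul_assoc']
  slice_rhs 2 3 => rw [← whisker_exchange]
  slice_rhs 3 4 => rw [← MonoidalCategory.tensorHom_def]
  simp

/-- The convolution unit is a right unit. -/
lemma hopf_conv_unit_right (μ : H ⊗ H ⟶ H) (η : 𝟙_ C ⟶ H) (Δ : H ⟶ H ⊗ H) (ε : H ⟶ 𝟙_ C)
    (mul_one' : (H ◁ η) ≫ μ = (ρ_ H).hom)
    (comul_counit' : Δ ≫ (H ◁ ε) = (ρ_ H).inv)
    (f : H ⟶ H) : Δ ≫ (f ⊗ₘ (ε ≫ η)) ≫ μ = f := by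
  rw [MonoidalCategory.tensorHom_def]
  simp only [MonoidalCategory.whiskerLeft_comp, Category.assoc, mul_one']
  rw [← whisker_exchange_assoc]
  slice_lhs 1 2 => rw [comul_counit']
  simp

/-- The convolution unit is a left unit. -/
lemma hopf_conv_unit_left (μ : H ⊗ H ⟶ H) (η : 𝟙_ C ⟶ H) (Δ : H ⟶ H ⊗ H) (ε : H ⟶ 𝟙_ C)
    (one_mul' : (η ▷ H) ≫ μ = (λ_ H).hom)
    (counit_comul' : Δ ≫ (ε ▷ H) = (λ_ H).inv)
    (f : H ⟶ H) : Δ ≫ ((ε ≫ η) ⊗ₘ f) ≫ μ = f := by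
  rw [tensorHom_def']
  simp only [comp_whiskerRight, Category.assoc, one_mul']
  rw [whisker_exchange_assoc]
  slice_lhs 1 2 => rw [counit_comul']
  simp

/-- Key rearrangement for the morphism `x ↦ l(Λ₁x)Λ₂`. -/
lemma hopf_shuffle1 (μ : H ⊗ H ⟶ H) (Δ : H ⟶ H ⊗ H) (l : H ⟶ 𝟙_ C) (L : 𝟙_ C ⟶ H)
    (mul_comul' : μ ≫ Δ = (Δ ⊗ₘ Δ) ≫ tensorμ H H H H ≫ (μ ⊗ₘ μ)) :
    Δ ≫ (((λ_ H).inv ≫ ((L ≫ Δ) ▷ H) ≫ (α_ H H H).hom ≫ (H ◁ (β_ H H).hom) ≫ (α_ H H H).inv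
        ≫ ((μ ≫ l) ▷ H) ≫ (λ_ H).hom) ▷ H) ≫ μ
      = (λ_ H).inv ≫ (L ▷ H) ≫ μ ≫ Δ ≫ (l ▷ H) ≫ (λ_ H).hom := by
  slice_rhs 3 4 => rw [mul_comul']
  simp only [Category.assoc]
  calc Δ ≫ (((λ_ H).inv ≫ ((L ≫ Δ) ▷ H) ≫ (α_ H H H).hom ≫ (H ◁ (β_ H H).hom) ≫ (α_ H H H).inv
        ≫ ((μ ≫ l) ▷ H) ≫ (λ_ H).hom) ▷ H) ≫ μ
      = Δ ≫ (λ_ (H ⊗ H)).inv ≫ (L ▷ (H ⊗ H)) ≫ (Δ ▷ (H ⊗ H)) ≫ tensorμ H H H H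
          ≫ (μ ▷ (H ⊗ H)) ≫ (l ▷ (H ⊗ H)) ≫ (λ_ (H ⊗ H)).hom ≫ μ := by
        simp only [tensorμ]
        monoidal
    _ = (λ_ H).inv ≫ (L ▷ H) ≫ (Δ ⊗ₘ Δ) ≫ tensorμ H H H H ≫ (μ ⊗ₘ μ) ≫ (l ▷ H) ≫ (λ_ H).hom := by
        rw [tensorHom_def Δ Δ, tensorHom_def μ μ]
        slice_rhs 7 8 => rw [whisker_exchange]
        slice_rhs 8 9 => rw [MonoidalCategory.leftUnitor_naturality]
        slice_rhs 3 4 => rw [← whisker_exchange]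
        slice_rhs 2 3 => rw [← whisker_exchange]
        slice_rhs 1 2 => rw [← MonoidalCategory.leftUnitor_inv_naturality]
        simp only [Category.assoc]

/-- Key rearrangement for the morphism `x ↦ Λ₁ l(xΛ₂)`. -/
lemma hopf_shuffle2 (μ : H ⊗ H ⟶ H) (Δ : H ⟶ H ⊗ H) (l : H ⟶ 𝟙_ C) (L : 𝟙_ C ⟶ H)
    (mul_comul' : μ ≫ Δ = (Δ ⊗ₘ Δ) ≫ tensorμ H H H H ≫ (μ ⊗ₘ μ)) :
    Δ ≫ (H ◁ ((ρ_ H).inv ≫ (H ◁ (L ≫ Δ)) ≫ (α_ H H H).inv ≫ ((β_ H H).hom ▷ H)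
        ≫ (α_ H H H).hom ≫ (H ◁ (μ ≫ l)) ≫ (ρ_ H).hom)) ≫ μ
      = (ρ_ H).inv ≫ (H ◁ L) ≫ μ ≫ Δ ≫ (H ◁ l) ≫ (ρ_ H).hom := by
  slice_rhs 3 4 => rw [mul_comul']
  simp only [Category.assoc]
  calc Δ ≫ (H ◁ ((ρ_ H).inv ≫ (H ◁ (L ≫ Δ)) ≫ (α_ H H H).inv ≫ ((β_ H H).hom ▷ H)
        ≫ (α_ H H H).hom ≫ (H ◁ (μ ≫ l)) ≫ (ρ_ H).hom)) ≫ μ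
      = Δ ≫ (ρ_ (H ⊗ H)).inv ≫ ((H ⊗ H) ◁ L) ≫ ((H ⊗ H) ◁ Δ) ≫ tensorμ H H H H
          ≫ ((H ⊗ H) ◁ μ) ≫ ((H ⊗ H) ◁ l) ≫ (ρ_ (H ⊗ H)).hom ≫ μ := by
        simp only [tensorμ]
        monoidal
    _ = (ρ_ H).inv ≫ (H ◁ L) ≫ (Δ ⊗ₘ Δ) ≫ tensorμ H H H H ≫ (μ ⊗ₘ μ) ≫ (H ◁ l) ≫ (ρ_ H).hom := by
        rw [tensorHom_def Δ Δ, tensorHom_def' μ μ]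
        slice_rhs 7 8 => rw [← whisker_exchange]
        slice_rhs 8 9 => rw [MonoidalCategory.rightUnitor_naturality]
        slice_rhs 2 3 => rw [whisker_exchange]
        slice_rhs 1 2 => rw [← MonoidalCategory.rightUnitor_inv_naturality]
        simp only [Category.assoc]

end HopfAux

/-- In a unimodular cocommutative Hopf algebra in a symmetric monoidal category, the antipode fixes the integral and the cointegral: `S ∘ L = L` and `l ∘ S = l`. -/
theorem antipode_fixes_integrals
    {C : Type*} [Category C] [MonoidalCategory C] [SymmetricCategory C]
    (H : C) (μ : H ⊗ H ⟶ H) (η : 𝟙_ C ⟶ H) (Δ : H ⟶ H ⊗ H) (ε : H ⟶ 𝟙_ C)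
    (S : H ⟶ H) (l : H ⟶ 𝟙_ C) (L : 𝟙_ C ⟶ H)
    (mul_assoc' : (μ ▷ H) ≫ μ = (α_ H H H).hom ≫ (H ◁ μ) ≫ μ)
    (one_mul' : (η ▷ H) ≫ μ = (λ_ H).hom)
    (mul_one' : (H ◁ η) ≫ μ = (ρ_ H).hom)
    (comul_assoc' : Δ ≫ (Δ ▷ H) ≫ (α_ H H H).hom = Δ ≫ (H ◁ Δ))
    (counit_comul' : Δ ≫ (ε ▷ H) = (λ_ H).inv)
    (comul_counit' : Δ ≫ (H ◁ ε) = (ρ_ H).inv)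
    (mul_comul' : μ ≫ Δ = (Δ ⊗ₘ Δ) ≫ tensorμ H H H H ≫ (μ ⊗ₘ μ))
    (mul_counit' : μ ≫ ε = (ε ⊗ₘ ε) ≫ (λ_ (𝟙_ C)).hom)
    (one_comul' : η ≫ Δ = (λ_ (𝟙_ C)).inv ≫ (η ⊗ₘ η))
    (one_counit' : η ≫ ε = 𝟙 (𝟙_ C))
    (cocomm : Δ ≫ (β_ H H).hom = Δ)
    (antipode_l : Δ ≫ (S ▷ H) ≫ μ = ε ≫ η)
    (antipode_r : Δ ≫ (H ◁ S) ≫ μ = ε ≫ η)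
    (integral_l : (L ▷ H) ≫ μ = (λ_ H).hom ≫ ε ≫ L)
    (integral_r : (H ◁ L) ≫ μ = (ρ_ H).hom ≫ ε ≫ L)
    (cointegral_l : Δ ≫ (l ▷ H) ≫ (λ_ H).hom = l ≫ η)
    (cointegral_r : Δ ≫ (H ◁ l) ≫ (ρ_ H).hom = l ≫ η)
    (normalization : L ≫ l = 𝟙 (𝟙_ C)) :
    L ≫ S = L ∧ S ≫ l = l := by
  -- the morphism T : x ↦ l(Λ₁x)Λ₂
  set T : H ⟶ H := (λ_ H).inv ≫ ((L ≫ Δ) ▷ H) ≫ (α_ H H H).hom ≫ (H ◁ (β_ H H).hom)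
      ≫ (α_ H H H).inv ≫ ((μ ≫ l) ▷ H) ≫ (λ_ H).hom with hT
  -- the morphism T' : x ↦ Λ₁ l(xΛ₂)
  set T' : H ⟶ H := (ρ_ H).inv ≫ (H ◁ (L ≫ Δ)) ≫ (α_ H H H).inv ≫ ((β_ H H).hom ▷ H)
      ≫ (α_ H H H).hom ≫ (H ◁ (μ ≫ l)) ≫ (ρ_ H).hom with hT'
  have hβ : (β_ H (𝟙_ C)).hom = (ρ_ H).hom ≫ (λ_ H).inv := by
    rw [← braiding_leftUnitor H]; simp
  -- T is a left convolution inverse of the identity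
  have hTe : Δ ≫ (T ⊗ₘ 𝟙 H) ≫ μ = ε ≫ η := by
    rw [tensorHom_id, hT, hopf_shuffle1 μ Δ l L mul_comul']
    slice_lhs 4 6 => rw [cointegral_l]
    slice_lhs 2 3 => rw [integral_l]
    slice_lhs 1 2 => rw [Iso.inv_hom_id]
    slice_lhs 3 4 => rw [normalization]
    simp
  -- T' is a right convolution inverse of the identity
  have hT'e : Δ ≫ (𝟙 H ⊗ₘ T') ≫ μ = ε ≫ η := by
    rw [id_tensorHom, hT', hopf_shuffle2 μ Δ l L mul_comul']
    slice_lhs 4 6 => rw [cointegral_r]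
    slice_lhs 2 3 => rw [integral_r]
    slice_lhs 1 2 => rw [Iso.inv_hom_id]
    slice_lhs 3 4 => rw [normalization]
    simp
  have hSr : Δ ≫ (𝟙 H ⊗ₘ S) ≫ μ = ε ≫ η := by rw [id_tensorHom]; exact antipode_r
  have hSl : Δ ≫ (S ⊗ₘ 𝟙 H) ≫ μ = ε ≫ η := by rw [tensorHom_id]; exact antipode_l
  -- S = T
  have hST : S = T := by
    calc S = Δ ≫ ((ε ≫ η) ⊗ₘ S) ≫ μ :=
          (hopf_conv_unit_left μ η Δ ε one_mul' counit_comul' S).symm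
      _ = Δ ≫ ((Δ ≫ (T ⊗ₘ 𝟙 H) ≫ μ) ⊗ₘ S) ≫ μ := by rw [hTe]
      _ = Δ ≫ (T ⊗ₘ (Δ ≫ (𝟙 H ⊗ₘ S) ≫ μ)) ≫ μ :=
          hopf_conv_assoc μ Δ mul_assoc' comul_assoc' T (𝟙 H) S
      _ = Δ ≫ (T ⊗ₘ (ε ≫ η)) ≫ μ := by rw [hSr]
      _ = T := hopf_conv_unit_right μ η Δ ε mul_one' comul_counit' T
  -- S = T'
  have hST' : S = T' := by
    calc S = Δ ≫ (S ⊗ₘ (ε ≫ η)) ≫ μ :=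
          (hopf_conv_unit_right μ η Δ ε mul_one' comul_counit' S).symm
      _ = Δ ≫ (S ⊗ₘ (Δ ≫ (𝟙 H ⊗ₘ T') ≫ μ)) ≫ μ := by rw [hT'e]
      _ = Δ ≫ ((Δ ≫ (S ⊗ₘ 𝟙 H) ≫ μ) ⊗ₘ T') ≫ μ :=
          (hopf_conv_assoc μ Δ mul_assoc' comul_assoc' S (𝟙 H) T').symm
      _ = Δ ≫ ((ε ≫ η) ⊗ₘ T') ≫ μ := by rw [hSl]
      _ = T' := hopf_conv_unit_left μ η Δ ε one_mul' counit_comul' T'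
  constructor
  · -- L ≫ S = L
    rw [hST, hT]
    calc L ≫ (λ_ H).inv ≫ ((L ≫ Δ) ▷ H) ≫ (α_ H H H).hom ≫ (H ◁ (β_ H H).hom)
          ≫ (α_ H H H).inv ≫ ((μ ≫ l) ▷ H) ≫ (λ_ H).hom
        = (λ_ (𝟙_ C)).inv ≫ ((L ≫ Δ) ▷ 𝟙_ C) ≫ (α_ H H (𝟙_ C)).hom
            ≫ (H ◁ ((H ◁ L) ≫ (β_ H H).hom)) ≫ (α_ H H H).inv ≫ ((μ ≫ l) ▷ H)
            ≫ (λ_ H).hom := by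
          rw [MonoidalCategory.leftUnitor_inv_naturality_assoc]
          slice_lhs 2 3 => rw [whisker_exchange]
          simp only [MonoidalCategory.whiskerLeft_comp, Category.assoc]
          monoidal
      _ = (λ_ (𝟙_ C)).inv ≫ ((L ≫ Δ) ▷ 𝟙_ C) ≫ (α_ H H (𝟙_ C)).hom
            ≫ (H ◁ (((ρ_ H).hom ≫ (λ_ H).inv) ≫ (L ▷ H))) ≫ (α_ H H H).inv ≫ ((μ ≫ l) ▷ H)
            ≫ (λ_ H).hom := by
          rw [BraidedCategory.braiding_naturality_right, hβ]
      _ = L ≫ Δ ≫ (((ρ_ H).inv ≫ ((H ◁ L) ≫ μ) ≫ l) ▷ H) ≫ (λ_ H).hom := by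
          simp only [MonoidalCategory.whiskerLeft_comp, comp_whiskerRight, Category.assoc]
          monoidal
      _ = L ≫ Δ ≫ (((ρ_ H).inv ≫ ((ρ_ H).hom ≫ ε ≫ L) ≫ l) ▷ H) ≫ (λ_ H).hom := by
          rw [integral_r]
      _ = L ≫ Δ ≫ (ε ▷ H) ≫ (λ_ H).hom := by
          simp only [Category.assoc, Iso.inv_hom_id_assoc, normalization, Category.comp_id,
            comp_whiskerRight]
      _ = L := by
          slice_lhs 2 3 => rw [counit_comul']
          simp
  · -- S ≫ l = l
    rw [hST', hT']
    calc ((ρ_ H).inv ≫ (H ◁ (L ≫ Δ)) ≫ (α_ H H H).inv ≫ ((β_ H H).hom ▷ H)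
          ≫ (α_ H H H).hom ≫ (H ◁ (μ ≫ l)) ≫ (ρ_ H).hom) ≫ l
        = (ρ_ H).inv ≫ (H ◁ (L ≫ Δ)) ≫ (α_ H H H).inv
            ≫ (((β_ H H).hom ≫ (l ▷ H)) ▷ H) ≫ (α_ (𝟙_ C) H H).hom ≫ (𝟙_ C ◁ μ)
            ≫ (λ_ H).hom ≫ l := by
          simp only [Category.assoc]
          rw [← MonoidalCategory.rightUnitor_naturality]
          slice_lhs 6 7 => rw [whisker_exchange]
          simp only [MonoidalCategory.whiskerLeft_comp, comp_whiskerRight, Category.assoc]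
          monoidal
      _ = (ρ_ H).inv ≫ (H ◁ (L ≫ Δ)) ≫ (α_ H H H).inv
            ≫ (((H ◁ l) ≫ ((ρ_ H).hom ≫ (λ_ H).inv)) ▷ H) ≫ (α_ (𝟙_ C) H H).hom ≫ (𝟙_ C ◁ μ)
            ≫ (λ_ H).hom ≫ l := by
          rw [← BraidedCategory.braiding_naturality_right, hβ]
      _ = (ρ_ H).inv ≫ (H ◁ (L ≫ Δ ≫ (l ▷ H) ≫ (λ_ H).hom)) ≫ μ ≫ l := by
          simp only [MonoidalCategory.whiskerLeft_comp, comp_whiskerRight, Category.assoc]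
          monoidal
      _ = (ρ_ H).inv ≫ (H ◁ η) ≫ μ ≫ l := by
          rw [cointegral_l, reassoc_of% normalization]
      _ = l := by
          rw [reassoc_of% mul_one']
          simp
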